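/- For any period n and cycle length a ≥ 1 with n + a − 1 ≤ T, the multi-period cost function L_{n,a}(y) = Σ_{k=1}^{a} ( h · E[max(y − ξ_{n,k}, 0)] + p · E[max(ξ_{n,k} − y, 0)] ) has at every point y a right derivative (derivative within [y, ∞)) equal to −a·p + (h+p) · Σ_{k=1}^{a} φ_{n,k}(y). -/

import Mathlib

open MeasureTheory ProbabilityTheory

/-- Accumulated demand `ξ_{n,k} = ξ_n + ⋯ + ξ_{n+k-1}`. -/
noncomputable def acc {Ω : Type*} (ξ : ℕ → Ω → ℝ) (n k : ℕ) (ω : Ω) : ℝ :=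
  ∑ i ∈ Finset.range k, ξ (n + i) ω

/-- Cumulative distribution function `φ_{n,k}(y) = P(ξ_{n,k} ≤ y)` of accumulated demand. -/
noncomputable def cdf {Ω : Type*} [MeasurableSpace Ω] (μ : Measure Ω) (ξ : ℕ → Ω → ℝ)
    (n k : ℕ) (y : ℝ) : ℝ :=
  (μ {ω | acc ξ n k ω ≤ y}).toReal

/-- Multi-period cost function
`L_{n,a}(y) = Σ_{k=1}^{a} (h·E[(y − ξ_{n,k})⁺] + p·E[(ξ_{n,k} − y)⁺])`. -/
noncomputable def Lmp {Ω : Type*} [MeasurableSpace Ω] (μ : Measure Ω) (h p : ℝ)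
    (ξ : ℕ → Ω → ℝ) (n a : ℕ) (y : ℝ) : ℝ :=
  ∑ k ∈ Finset.Icc 1 a,
    (h * ∫ ω, max (y - acc ξ n k ω) 0 ∂μ + p * ∫ ω, max (acc ξ n k ω - y) 0 ∂μ)
open Filter Set Topology


lemma intmax {Ω : Type*} [MeasurableSpace Ω] (μ : Measure Ω) (X : Ω → ℝ)
    (hi : Integrable X μ) [IsFiniteMeasure μ] (z : ℝ) :
    Integrable (fun ω => max (z - X ω) 0) μ :=
  ((integrable_const z).sub hi).pos_part

lemma lemA {Ω : Type*} [MeasurableSpace Ω] (μ : Measure Ω) [IsProbabilityMeasure μ]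
    (X : Ω → ℝ) (hm : Measurable X) (hi : Integrable X μ) (y : ℝ) :
    HasDerivWithinAt (fun z => ∫ ω, max (z - X ω) 0 ∂μ)
      ((μ {ω | X ω ≤ y}).toReal) (Set.Ici y) y := by
  rw [hasDerivWithinAt_iff_tendsto_slope]
  set F : ℝ → Ω → ℝ := fun z ω => (max (z - X ω) 0 - max (y - X ω) 0) / (z - y) with hF
  have hmeasset : MeasurableSet {ω | X ω ≤ y} := hm measurableSet_Iic
  have key : Tendsto (fun z => ∫ ω, F z ω ∂μ) (𝓝[Set.Ici y \ {y}] y)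
      (𝓝 (∫ ω, ({ω | X ω ≤ y}).indicator (1 : Ω → ℝ) ω ∂μ)) := by
    apply tendsto_integral_filter_of_dominated_convergence (fun _ => (1:ℝ))
    · filter_upwards with z
      exact ((((intmax μ X hi z).sub (intmax μ X hi y)).div_const _).aestronglyMeasurable)
    · filter_upwards [self_mem_nhdsWithin] with z hz
      filter_upwards with ω
      have hzy : y < z := lt_of_le_of_ne hz.1 (Ne.symm hz.2)
      have : |max (z - X ω) 0 - max (y - X ω) 0| ≤ |z - y| := by
        have := abs_max_sub_max_le_abs (z - X ω) (y - X ω) 0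
        simpa using this.trans_eq (by ring_nf)
      rw [Real.norm_eq_abs, hF, abs_div]
      rw [div_le_one (abs_pos.mpr (sub_ne_zero.mpr (fun hq => hz.2 hq)))]
      simpa using this
    · exact integrable_const 1
    · filter_upwards with ω
      by_cases hX : X ω ≤ y
      · have : ∀ᶠ z in 𝓝[Set.Ici y \ {y}] y, F z ω = 1 := by
          filter_upwards [self_mem_nhdsWithin] with z hz
          have hzy : y < z := lt_of_le_of_ne hz.1 (Ne.symm hz.2)
          have h1 : max (z - X ω) 0 = z - X ω := max_eq_left (by linarith)
          have h2 : max (y - X ω) 0 = y - X ω := max_eq_left (by linarith)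
          rw [hF]; simp only [h1, h2]
          rw [show z - X ω - (y - X ω) = z - y by ring, div_self (sub_ne_zero.mpr (ne_of_gt hzy))]
        have hid : ({ω | X ω ≤ y}).indicator (1 : Ω → ℝ) ω = 1 :=
          Set.indicator_of_mem (show ω ∈ {ω | X ω ≤ y} from hX) _
        rw [hid]
        exact Tendsto.congr' (this.mono fun z hq => hq.symm) tendsto_const_nhds
      · push_neg at hX
        have hmem : Set.Iio (X ω) ∈ 𝓝[Set.Ici y \ {y}] y :=
          nhdsWithin_le_nhds (Iio_mem_nhds hX)
        have : ∀ᶠ z in 𝓝[Set.Ici y \ {y}] y, F z ω = 0 := by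
          filter_upwards [hmem] with z hz
          have h1 : max (z - X ω) 0 = 0 := max_eq_right (by simp at hz; linarith)
          have h2 : max (y - X ω) 0 = 0 := max_eq_right (by linarith)
          rw [hF]; simp [h1, h2]
        have hid : ({ω | X ω ≤ y}).indicator (1 : Ω → ℝ) ω = 0 :=
          Set.indicator_of_notMem (by exact not_le.mpr hX) _
        rw [hid]
        exact Tendsto.congr' (this.mono fun z hq => hq.symm) tendsto_const_nhds
  rw [integral_indicator_one hmeasset] at key
  apply key.congr'
  filter_upwards [self_mem_nhdsWithin] with z hz
  have hzy : z ≠ y := hz.2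
  rw [slope_def_field]
  rw [← integral_sub (intmax μ X hi z) (intmax μ X hi y), ← integral_div]

/-- right derivative -/
theorem stmt14 {Ω : Type*} [MeasurableSpace Ω] (μ : Measure Ω) [IsProbabilityMeasure μ]
    (T : ℕ) (ξ : ℕ → Ω → ℝ)
    (hmeas : ∀ i, Measurable (ξ i)) (hint : ∀ i, Integrable (ξ i) μ)
    (hpos : ∀ i, ∀ᵐ ω ∂μ, 0 ≤ ξ i ω)
    (hind : iIndepFun ξ μ)
    (h p : ℝ) (hh : 0 < h) (hp : 0 < p)
    (n a : ℕ) (hn : 1 ≤ n) (ha : 1 ≤ a) (hna : n + a - 1 ≤ T) (y : ℝ) :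
    HasDerivWithinAt (Lmp μ h p ξ n a)
      (-(a : ℝ) * p + (h + p) * ∑ k ∈ Finset.Icc 1 a, cdf μ ξ n k y)
      (Set.Ici y) y := by
  have haccm : ∀ k, Measurable (acc ξ n k) := fun k =>
    Finset.measurable_sum _ (fun i _ => hmeas _)
  have hacci : ∀ k, Integrable (acc ξ n k) μ := fun k =>
    integrable_finset_sum _ (fun i _ => hint _)
  have hterm : ∀ k ∈ Finset.Icc 1 a,
      HasDerivWithinAt (fun z => h * ∫ ω, max (z - acc ξ n k ω) 0 ∂μ
        + p * ∫ ω, max (acc ξ n k ω - z) 0 ∂μ)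
      (h * cdf μ ξ n k y + p * (cdf μ ξ n k y - 1)) (Set.Ici y) y := by
    intro k _
    have hA := lemA μ (acc ξ n k) (haccm k) (hacci k) y
    have hA' : HasDerivWithinAt (fun z => ∫ ω, max (z - acc ξ n k ω) 0 ∂μ)
        (cdf μ ξ n k y) (Set.Ici y) y := hA
    have hB : HasDerivWithinAt (fun z => ∫ ω, max (acc ξ n k ω - z) 0 ∂μ)
        (cdf μ ξ n k y - 1) (Set.Ici y) y := by
      have heq : (fun z => ∫ ω, max (acc ξ n k ω - z) 0 ∂μ)
          = fun z => ((∫ ω, acc ξ n k ω ∂μ) - z) + ∫ ω, max (z - acc ξ n k ω) 0 ∂μ := by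
        funext z
        have hpt : ∀ ω, max (acc ξ n k ω - z) 0
            = (acc ξ n k ω - z) + max (z - acc ξ n k ω) 0 := by
          intro ω
          rcases le_total (acc ξ n k ω) z with h' | h'
          · rw [max_eq_right (by linarith), max_eq_left (by linarith)]; ring
          · rw [max_eq_left (by linarith), max_eq_right (by linarith)]; ring
        simp_rw [hpt]
        have h1 : Integrable (fun ω => acc ξ n k ω - z) μ := (hacci k).sub (integrable_const z)
        rw [integral_add h1 (intmax μ _ (hacci k) z),
          integral_sub (hacci k) (integrable_const z), integral_const]
        simp
      rw [heq]
      have : HasDerivWithinAt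
          (fun z => ((∫ ω, acc ξ n k ω ∂μ) - z) + ∫ ω, max (z - acc ξ n k ω) 0 ∂μ)
          ((0 - 1) + cdf μ ξ n k y) (Set.Ici y) y :=
        (((hasDerivWithinAt_const y _ _).sub (hasDerivWithinAt_id y _))).add hA'
      convert this using 1; ring
    exact (hA'.const_mul h).add (hB.const_mul p)
  have hsum := HasDerivWithinAt.fun_sum hterm
  have hLmp : Lmp μ h p ξ n a = fun z => ∑ k ∈ Finset.Icc 1 a,
      (h * ∫ ω, max (z - acc ξ n k ω) 0 ∂μ + p * ∫ ω, max (acc ξ n k ω - z) 0 ∂μ) := rfl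
  rw [hLmp]
  convert hsum using 1
  · rfl
  · rfl
  simp only [mul_sub, mul_one]
  rw [Finset.sum_add_distrib, Finset.sum_sub_distrib, Finset.sum_const, Nat.card_Icc,
    ← Finset.mul_sum, ← Finset.mul_sum]
  simp only [Nat.add_sub_cancel, nsmul_eq_mul]
  ring
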